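/- Let G and H be groups with symmetric generating sets X and Y respectively, Λ and Γ finite alphabets, and C a class of formal languages closed under intersection with regular languages, finite intersection and inverse homomorphism. If (G,X,Λ) and (H,Y,Γ) are C-graph automatic, then the direct product G×H is C-graph automatic with respect to the generating set Z = {(x,1_H) : x ∈ X} ∪ {(1_G,y) : y ∈ Y} and the alphabet (Λ∪{⋄})×(Γ∪{⋄}), with normal form language ⊗(L_G, L_H) where L_G and L_H are the normal forms for G and H. -/

import Mathlib

/-- The convolution of two words `u ∈ A*`, `v ∈ B*`: the word of length
`max |u| |v|` over `Option A × Option B` (with `none` playing the role of the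
padding symbol ⋄) whose `i`-th letter is the pair of the `i`-th letters of `u`
and `v`, padded with `none`. -/
def conv {A B : Type} (u : List A) (v : List B) : List (Option A × Option B) :=
  (List.range (max u.length v.length)).map fun i => (u[i]?, v[i]?)

/-- The multiplier language `L_x` of a normal form `nf : L → G` for the
group element `x`: all convolutions `⊗(u,v)` with `u, v ∈ L` and `ū x = v̄`. -/
def Mult {Λ G : Type} [Group G] (nf : List Λ → G) (L : Language Λ) (x : G) :
    Language (Option Λ × Option Λ) :=
  { w | ∃ u ∈ L, ∃ v ∈ L, nf u * x = nf v ∧ w = conv u v }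

/-- The word length (geodesic length) `‖g‖_X` of `g` with respect to a generating set
`X ⊆ G`: the minimal length of a word over `X` whose product is `g`. -/
noncomputable def wordLength {G : Type} [Group G] (X : Set G) (g : G) : ℕ :=
  sInf { n | ∃ w : List G, (∀ a ∈ w, a ∈ X) ∧ w.length = n ∧ w.prod = g }

/-- A language is regular if it is accepted by a deterministic finite automaton
with finitely many states. -/
def IsRegLang {α : Type} (L : Language α) : Prop :=
  ∃ (σ : Type) (_ : Fintype σ) (M : DFA α σ), M.accepts = L

/-- A class of formal languages: an assignment of a set of languages to each alphabet. -/
def LangClass : Type 1 := (α : Type) → Set (Language α)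

/-- The image of a language under the monoid homomorphism `α* → β*` induced by
`f : α → List β`. -/
def homImage {α β : Type} (f : α → List β) (L : Language α) : Language β :=
  { w | ∃ u ∈ L, w = (u.map f).flatten }

/-- The preimage of a language under the monoid homomorphism `α* → β*` induced by
`f : α → List β`. -/
def homPreimage {α β : Type} (f : α → List β) (L : Language β) : Language α :=
  { u | (u.map f).flatten ∈ L }

/-- `C` is closed under homomorphism. -/
def ClosedUnderHom (C : LangClass) : Prop :=
  ∀ (α β : Type) [Fintype α] [Fintype β], ∀ L ∈ C α, ∀ f : α → List β, homImage f L ∈ C β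

/-- `C` is closed under ε-free homomorphism. -/
def ClosedUnderEpsFreeHom (C : LangClass) : Prop :=
  ∀ (α β : Type) [Fintype α] [Fintype β], ∀ L ∈ C α, ∀ f : α → List β,
    (∀ a, f a ≠ []) → homImage f L ∈ C β

/-- `C` is closed under inverse homomorphism. -/
def ClosedUnderInvHom (C : LangClass) : Prop :=
  ∀ (α β : Type) [Fintype α] [Fintype β], ∀ L ∈ C β, ∀ f : α → List β, homPreimage f L ∈ C α

/-- `C` is closed under (finite) intersection. -/
def ClosedUnderInter (C : LangClass) : Prop :=
  ∀ (α : Type) [Fintype α], ∀ L₁ ∈ C α, ∀ L₂ ∈ C α, L₁ ⊓ L₂ ∈ C α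

/-- `C` is closed under intersection with regular languages. -/
def ClosedUnderInterReg (C : LangClass) : Prop :=
  ∀ (α : Type) [Fintype α], ∀ L ∈ C α, ∀ R : Language α, IsRegLang R → L ⊓ R ∈ C α

/-- `C` contains all regular languages. -/
def ContainsRegular (C : LangClass) : Prop :=
  ∀ (α : Type) [Fintype α], ∀ L : Language α, IsRegLang L → L ∈ C α

/-- `(G,X,Λ)` is `C`-graph automatic via the normal form `L ⊆ Λ*` with bijection
`nf : L → G`: `L ∈ C`, `nf` restricted to `L` is a bijection onto `G`, and every
multiplier language `L_x`, `x ∈ X`, is in `C`. -/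
def CGraphAutoWith (C : LangClass) {G : Type} [Group G] (X : Set G) {Λ : Type} [Fintype Λ]
    (L : Language Λ) (nf : List Λ → G) : Prop :=
  Set.BijOn nf L Set.univ ∧ L ∈ C Λ ∧ ∀ x ∈ X, Mult nf L x ∈ C (Option Λ × Option Λ)

/-- The convolution of two languages: `⊗(L₁,L₂) = {⊗(u,v) : u ∈ L₁, v ∈ L₂}`. -/
def convLang {A B : Type} (L₁ : Language A) (L₂ : Language B) :
    Language (Option A × Option B) :=
  { w | ∃ u ∈ L₁, ∃ v ∈ L₂, w = conv u v }

lemma conv_nil_nil {A B : Type} : conv ([] : List A) ([] : List B) = [] := by simp [conv]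

lemma conv_cons_cons {A B : Type} (a : A) (b : B) (u : List A) (v : List B) :
    conv (a::u) (b::v) = (some a, some b) :: conv u v := by
  simp [conv, Nat.succ_max_succ, List.range_succ_eq_map, List.map_map, Function.comp]

lemma conv_cons_nil {A B : Type} (a : A) (u : List A) :
    conv (a::u) ([] : List B) = (some a, none) :: conv u [] := by
  simp [conv, List.range_succ_eq_map, List.map_map, Function.comp]

lemma conv_nil_cons {A B : Type} (b : B) (v : List B) :
    conv ([] : List A) (b::v) = (none, some b) :: conv [] v := by
  simp [conv, List.range_succ_eq_map, List.map_map, Function.comp]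

lemma filterMap_fst_conv {A B : Type} (u : List A) (v : List B) :
    (conv u v).filterMap Prod.fst = u := by
  induction u generalizing v with
  | nil =>
    induction v with
    | nil => simp [conv_nil_nil]
    | cons b v ih => simp [conv_nil_cons, ih]
  | cons a u ih =>
    cases v with
    | nil => simp [conv_cons_nil, ih]
    | cons b v => simp [conv_cons_cons, ih]

lemma filterMap_snd_conv {A B : Type} (u : List A) (v : List B) :
    (conv u v).filterMap Prod.snd = v := by
  induction v generalizing u with
  | nil =>
    induction u with
    | nil => simp [conv_nil_nil]
    | cons a u ih => simp [conv_cons_nil, ih]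
  | cons b v ih =>
    cases u with
    | nil => simp [conv_nil_cons, ih]
    | cons a u => simp [conv_cons_cons, ih]

lemma conv_inj {A B : Type} {u u' : List A} {v v' : List B}
    (h : conv u v = conv u' v') : u = u' ∧ v = v' := by
  constructor
  · have := congrArg (List.filterMap Prod.fst) h
    simpa [filterMap_fst_conv] using this
  · have := congrArg (List.filterMap Prod.snd) h
    simpa [filterMap_snd_conv] using this

lemma flatten_map_toList {α β : Type} (f : α → Option β) (w : List α) :
    (w.map fun d => (f d).toList).flatten = w.filterMap f := by
  induction w with
  | nil => rfl
  | cons a w ih => cases h : f a <;> simp [List.filterMap_cons, h, ih]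

def pairOpt {A B : Type} (d : Option (Option A × Option B) × Option (Option A × Option B)) :
    Option (Option A × Option A) :=
  if (d.1.bind Prod.fst).isNone ∧ (d.2.bind Prod.fst).isNone then none
  else some (d.1.bind Prod.fst, d.2.bind Prod.fst)

def shareOpt {A B : Type} (d : Option (Option A × Option B) × Option (Option A × Option B)) :
    Option B := d.1.bind Prod.snd

lemma filterMap_pairOpt_aux {A B : Type} : ∀ (n : ℕ) (u₁ u₂ : List A) (v : List B),
    u₁.length + u₂.length + v.length ≤ n →
    (conv (conv u₁ v) (conv u₂ v)).filterMap pairOpt = conv u₁ u₂ := by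
  intro n
  induction n with
  | zero =>
    intro u₁ u₂ v h
    have h1 : u₁ = [] := by cases u₁ <;> simp_all
    have h2 : u₂ = [] := by cases u₂ <;> simp_all
    have h3 : v = [] := by cases v <;> simp_all
    subst h1; subst h2; subst h3; simp [conv_nil_nil]
  | succ n ih =>
    intro u₁ u₂ v h
    match u₁, u₂, v with
    | [], [], [] => simp [conv_nil_nil]
    | a::u₁, b::u₂, c::v =>
      rw [conv_cons_cons a c, conv_cons_cons b c, conv_cons_cons, conv_cons_cons,
        List.filterMap_cons]
      simp [pairOpt]
      exact ih u₁ u₂ v (by simp only [List.length_cons, List.length_nil] at h ⊢; omega)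
    | [], b::u₂, c::v =>
      rw [conv_nil_cons, conv_cons_cons b c, conv_cons_cons, conv_nil_cons,
        List.filterMap_cons]
      simp [pairOpt]
      exact ih [] u₂ v (by simp only [List.length_cons, List.length_nil] at h ⊢; omega)
    | a::u₁, [], c::v =>
      rw [conv_cons_cons a c, conv_nil_cons, conv_cons_cons, conv_cons_nil,
        List.filterMap_cons]
      simp [pairOpt]
      exact ih u₁ [] v (by simp only [List.length_cons, List.length_nil] at h ⊢; omega)
    | [], [], c::v =>
      rw [conv_nil_cons, conv_cons_cons, List.filterMap_cons]
      simp [pairOpt]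
      exact ih [] [] v (by simp only [List.length_cons, List.length_nil] at h ⊢; omega)
    | a::u₁, b::u₂, [] =>
      rw [conv_cons_nil a, conv_cons_nil b, conv_cons_cons, conv_cons_cons,
        List.filterMap_cons]
      simp [pairOpt]
      exact ih u₁ u₂ [] (by simp only [List.length_cons, List.length_nil] at h ⊢; omega)
    | a::u₁, [], [] =>
      rw [conv_cons_nil a, conv_nil_nil, conv_cons_nil, conv_cons_nil,
        List.filterMap_cons]
      simp [pairOpt]
      have := ih u₁ [] [] (by simp only [List.length_cons, List.length_nil] at h ⊢; omega)
      rw [conv_nil_nil] at this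
      exact this
    | [], b::u₂, [] =>
      rw [conv_cons_nil b, conv_nil_nil, conv_nil_cons, conv_nil_cons,
        List.filterMap_cons]
      simp [pairOpt]
      have := ih [] u₂ [] (by simp only [List.length_cons, List.length_nil] at h ⊢; omega)
      rw [conv_nil_nil] at this
      exact this

lemma filterMap_shareOpt_aux {A B : Type} : ∀ (n : ℕ) (u₁ u₂ : List A) (v : List B),
    u₁.length + u₂.length + v.length ≤ n →
    (conv (conv u₁ v) (conv u₂ v)).filterMap shareOpt = v := by
  intro n
  induction n with
  | zero =>
    intro u₁ u₂ v h
    have h1 : u₁ = [] := by cases u₁ <;> simp_all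
    have h2 : u₂ = [] := by cases u₂ <;> simp_all
    have h3 : v = [] := by cases v <;> simp_all
    subst h1; subst h2; subst h3; simp [conv_nil_nil]
  | succ n ih =>
    intro u₁ u₂ v h
    match u₁, u₂, v with
    | [], [], [] => simp [conv_nil_nil]
    | a::u₁, b::u₂, c::v =>
      rw [conv_cons_cons a c, conv_cons_cons b c, conv_cons_cons]
      simp [shareOpt]
      exact ih u₁ u₂ v (by simp only [List.length_cons, List.length_nil] at h ⊢; omega)
    | [], b::u₂, c::v =>
      rw [conv_nil_cons, conv_cons_cons b c, conv_cons_cons]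
      simp [shareOpt]
      exact ih [] u₂ v (by simp only [List.length_cons, List.length_nil] at h ⊢; omega)
    | a::u₁, [], c::v =>
      rw [conv_cons_cons a c, conv_nil_cons, conv_cons_cons]
      simp [shareOpt]
      exact ih u₁ [] v (by simp only [List.length_cons, List.length_nil] at h ⊢; omega)
    | [], [], c::v =>
      rw [conv_nil_cons, conv_cons_cons]
      simp [shareOpt]
      exact ih [] [] v (by simp only [List.length_cons, List.length_nil] at h ⊢; omega)
    | a::u₁, b::u₂, [] =>
      rw [conv_cons_nil a, conv_cons_nil b, conv_cons_cons, List.filterMap_cons]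
      show Option.toList none ++ _ = _
      rw [Option.toList_none, List.nil_append]
      exact ih u₁ u₂ [] (by simp only [List.length_cons, List.length_nil] at h ⊢; omega)
    | a::u₁, [], [] =>
      rw [conv_cons_nil a, conv_nil_nil, conv_cons_nil, List.filterMap_cons]
      show Option.toList none ++ _ = _
      rw [Option.toList_none, List.nil_append]
      have := ih u₁ [] [] (by simp only [List.length_cons, List.length_nil] at h ⊢; omega)
      rw [conv_nil_nil] at this
      exact this
    | [], b::u₂, [] =>
      rw [conv_cons_nil b, conv_nil_nil, conv_nil_cons, List.filterMap_cons]
      show Option.toList none ++ _ = _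
      rw [Option.toList_none, List.nil_append]
      have := ih [] u₂ [] (by simp only [List.length_cons, List.length_nil] at h ⊢; omega)
      rw [conv_nil_nil] at this
      exact this

lemma dfa_evalFrom_cons {α σ : Type} (M : DFA α σ) (s : σ) (a : α) (w : List α) :
    M.evalFrom s (a :: w) = M.evalFrom (M.step s a) w := rfl

def convDFA (A B : Type) : DFA (Option A × Option B) (Option (Bool × Bool)) where
  step := fun s d =>
    match s, d with
    | none, _ => none
    | some _, (none, none) => none
    | some (b₁, b₂), (a, c) =>
      if (a.isSome = true → b₁ = true) ∧ (c.isSome = true → b₂ = true) then some (a.isSome, c.isSome) else none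
  start := some (true, true)
  accept := { s | s.isSome }

lemma convDFA_evalFrom_none {A B : Type} (w : List (Option A × Option B)) :
    (convDFA A B).evalFrom none w = none := by
  induction w with
  | nil => rfl
  | cons d w ih => rw [dfa_evalFrom_cons]; exact ih

lemma convDFA_sound {A B : Type} : ∀ (w : List (Option A × Option B)) (b₁ b₂ : Bool),
    ((convDFA A B).evalFrom (some (b₁, b₂)) w).isSome →
    ∃ (u : List A) (v : List B), (b₁ = false → u = []) ∧ (b₂ = false → v = []) ∧
      w = conv u v := by
  intro w
  induction w with
  | nil =>
    intro b₁ b₂ _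
    exact ⟨[], [], fun _ => rfl, fun _ => rfl, (conv_nil_nil).symm⟩
  | cons d w ih =>
    intro b₁ b₂ h
    rw [dfa_evalFrom_cons] at h
    obtain ⟨a, c⟩ := d
    match a, c with
    | none, none => rw [show (convDFA A B).step (some (b₁,b₂)) (none,none) = none from rfl,
        convDFA_evalFrom_none] at h; simp at h
    | some a, none =>
      have hstep : (convDFA A B).step (some (b₁,b₂)) (some a, none)
          = if ((true = true → b₁ = true) ∧ (false = true → b₂ = true)) then some (true, false) else none := rfl
      rw [hstep] at h
      by_cases hb : ((true = true → b₁ = true) ∧ (false = true → b₂ = true))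
      · rw [if_pos hb] at h
        obtain ⟨u, v, hu, hv, hw⟩ := ih true false h
        refine ⟨a :: u, [], fun hf => absurd (hb.1 rfl) (by simp [hf]), fun _ => rfl, ?_⟩
        rw [conv_cons_nil, ← hv rfl, ← hw]
      · rw [if_neg hb, convDFA_evalFrom_none] at h; simp at h
    | none, some c =>
      have hstep : (convDFA A B).step (some (b₁,b₂)) (none, some c)
          = if ((false = true → b₁ = true) ∧ (true = true → b₂ = true)) then some (false, true) else none := rfl
      rw [hstep] at h
      by_cases hb : ((false = true → b₁ = true) ∧ (true = true → b₂ = true))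
      · rw [if_pos hb] at h
        obtain ⟨u, v, hu, hv, hw⟩ := ih false true h
        refine ⟨[], c :: v, fun _ => rfl, fun hf => absurd (hb.2 rfl) (by simp [hf]), ?_⟩
        rw [conv_nil_cons, ← hu rfl, ← hw]
      · rw [if_neg hb, convDFA_evalFrom_none] at h; simp at h
    | some a, some c =>
      have hstep : (convDFA A B).step (some (b₁,b₂)) (some a, some c)
          = if ((true = true → b₁ = true) ∧ (true = true → b₂ = true)) then some (true, true) else none := rfl
      rw [hstep] at h
      by_cases hb : ((true = true → b₁ = true) ∧ (true = true → b₂ = true))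
      · rw [if_pos hb] at h
        obtain ⟨u, v, hu, hv, hw⟩ := ih true true h
        exact ⟨a :: u, c :: v, fun hf => absurd (hb.1 rfl) (by simp [hf]),
          fun hf => absurd (hb.2 rfl) (by simp [hf]), by rw [conv_cons_cons, ← hw]⟩
      · rw [if_neg hb, convDFA_evalFrom_none] at h; simp at h

lemma convDFA_complete {A B : Type} : ∀ (u : List A) (v : List B) (b₁ b₂ : Bool),
    (u ≠ [] → b₁ = true) → (v ≠ [] → b₂ = true) →
    ((convDFA A B).evalFrom (some (b₁, b₂)) (conv u v)).isSome := by
  intro u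
  induction u with
  | nil =>
    intro v
    induction v with
    | nil => intro b₁ b₂ _ _; rw [conv_nil_nil]; rfl
    | cons c v ih =>
      intro b₁ b₂ _ h₂
      rw [h₂ (by simp), conv_nil_cons, dfa_evalFrom_cons]
      have hstep : (convDFA A B).step (some (b₁, true)) (none, some c) = some (false, true) := by
        simp [convDFA]
      rw [hstep]
      exact ih false true (fun h => absurd rfl h) (fun _ => rfl)
  | cons a u ih =>
    intro v b₁ b₂ h₁ h₂
    rw [h₁ (by simp)]
    cases v with
    | nil =>
      rw [conv_cons_nil, dfa_evalFrom_cons]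
      have hstep : (convDFA A B).step (some (true, b₂)) (some a, none) = some (true, false) := by
        simp [convDFA]
      rw [hstep]
      exact ih [] true false (fun _ => rfl) (fun h => absurd rfl h)
    | cons c v =>
      rw [h₂ (by simp), conv_cons_cons, dfa_evalFrom_cons]
      have hstep : (convDFA A B).step (some (true, true)) (some a, some c) = some (true, true) := by
        simp [convDFA]
      rw [hstep]
      exact ih v true true (fun _ => rfl) (fun _ => rfl)

lemma convDFA_accepts {A B : Type} (w : List (Option A × Option B)) :
    w ∈ (convDFA A B).accepts ↔ ∃ (u : List A) (v : List B), w = conv u v := by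
  rw [DFA.mem_accepts]
  constructor
  · intro h
    obtain ⟨u, v, _, _, hw⟩ := convDFA_sound w true true h
    exact ⟨u, v, hw⟩
  · rintro ⟨u, v, rfl⟩
    have := convDFA_complete u v true true (fun _ => rfl) (fun _ => rfl)
    exact this

open Classical in
noncomputable def dconvDFA (A B : Type) :
    DFA (Option (Option A × Option B) × Option (Option A × Option B))
      (Option (Bool × Bool × Bool)) where
  step := fun s d =>
    match s with
    | none => none
    | some (b₁, b₂, bγ) =>
      if (d.1.bind Prod.snd = d.2.bind Prod.snd) ∧ (d.1 = none → d.2 ≠ none) ∧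
         (∀ a c, d.1 = some (a,c) → ((a.isSome : Prop) ∨ (c.isSome : Prop))) ∧
         (∀ a c, d.2 = some (a,c) → ((a.isSome : Prop) ∨ (c.isSome : Prop))) ∧
         ((d.1.bind Prod.fst).isSome = true → b₁ = true) ∧
         ((d.2.bind Prod.fst).isSome = true → b₂ = true) ∧
         ((d.1.bind Prod.snd).isSome = true → bγ = true)
      then some ((d.1.bind Prod.fst).isSome, (d.2.bind Prod.fst).isSome,
        (d.1.bind Prod.snd).isSome)
      else none
  start := some (true, true, true)
  accept := { s | s.isSome }

open Classical in
lemma dconvDFA_step_some {A B : Type} (b₁ b₂ bγ : Bool)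
    (d : Option (Option A × Option B) × Option (Option A × Option B)) :
    (dconvDFA A B).step (some (b₁, b₂, bγ)) d =
      if (d.1.bind Prod.snd = d.2.bind Prod.snd) ∧ (d.1 = none → d.2 ≠ none) ∧
         (∀ a c, d.1 = some (a,c) → ((a.isSome : Prop) ∨ (c.isSome : Prop))) ∧
         (∀ a c, d.2 = some (a,c) → ((a.isSome : Prop) ∨ (c.isSome : Prop))) ∧
         ((d.1.bind Prod.fst).isSome = true → b₁ = true) ∧
         ((d.2.bind Prod.fst).isSome = true → b₂ = true) ∧
         ((d.1.bind Prod.snd).isSome = true → bγ = true)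
      then some ((d.1.bind Prod.fst).isSome, (d.2.bind Prod.fst).isSome,
        (d.1.bind Prod.snd).isSome)
      else none := rfl

lemma dconvDFA_evalFrom_none {A B : Type}
    (w : List (Option (Option A × Option B) × Option (Option A × Option B))) :
    (dconvDFA A B).evalFrom none w = none := by
  induction w with
  | nil => rfl
  | cons d w ih => rw [dfa_evalFrom_cons]; exact ih

lemma dconvDFA_sound {A B : Type} :
    ∀ (w : List (Option (Option A × Option B) × Option (Option A × Option B)))
      (b₁ b₂ bγ : Bool),
    ((dconvDFA A B).evalFrom (some (b₁, b₂, bγ)) w).isSome →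
    ∃ (u₁ u₂ : List A) (v : List B),
      (b₁ = false → u₁ = []) ∧ (b₂ = false → u₂ = []) ∧ (bγ = false → v = []) ∧
      w = conv (conv u₁ v) (conv u₂ v) := by
  intro w
  induction w with
  | nil =>
    intro b₁ b₂ bγ _
    exact ⟨[], [], [], fun _ => rfl, fun _ => rfl, fun _ => rfl, by
      rw [conv_nil_nil, conv_nil_nil]⟩
  | cons d w ih =>
    intro b₁ b₂ bγ h
    obtain ⟨p, q⟩ := d
    rw [dfa_evalFrom_cons, dconvDFA_step_some] at h
    by_cases hC : ((p, q).1.bind Prod.snd = (p, q).2.bind Prod.snd) ∧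
         ((p, q).1 = none → (p, q).2 ≠ none) ∧
         (∀ a c, (p, q).1 = some (a,c) → ((a.isSome : Prop) ∨ (c.isSome : Prop))) ∧
         (∀ a c, (p, q).2 = some (a,c) → ((a.isSome : Prop) ∨ (c.isSome : Prop))) ∧
         (((p, q).1.bind Prod.fst).isSome = true → b₁ = true) ∧
         (((p, q).2.bind Prod.fst).isSome = true → b₂ = true) ∧
         (((p, q).1.bind Prod.snd).isSome = true → bγ = true)
    · rw [if_pos hC] at h
      obtain ⟨hγeq, hne, hv1, hv2, hi1, hi2, hiγ⟩ := hC
      cases p with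
      | none =>
        cases q with
        | none => exact absurd rfl (hne rfl)
        | some qc =>
          obtain ⟨a₂, c₂⟩ := qc
          have hc₂ : c₂ = none := by simpa using hγeq.symm
          subst hc₂
          obtain ⟨b, rfl⟩ : ∃ b, a₂ = some b := by
            rcases hv2 a₂ none rfl with h' | h'
            · cases a₂ with
              | none => simp at h'
              | some b => exact ⟨b, rfl⟩
            · simp at h'
          obtain ⟨u₁, u₂, v, hu₁, hu₂, hv, hw⟩ := ih false true false h
          rw [hu₁ rfl, hv rfl, conv_nil_nil] at hw
          refine ⟨[], b :: u₂, [], fun _ => rfl,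
            fun hf => absurd (hi2 rfl) (by simp [hf]), fun _ => rfl, ?_⟩
          rw [conv_nil_nil, conv_cons_nil, conv_nil_cons, ← hw]
      | some pc =>
        obtain ⟨a₁, c₁⟩ := pc
        cases q with
        | none =>
          have hc₁ : c₁ = none := by simpa using hγeq
          subst hc₁
          obtain ⟨a, rfl⟩ : ∃ a, a₁ = some a := by
            rcases hv1 a₁ none rfl with h' | h'
            · cases a₁ with
              | none => simp at h'
              | some a => exact ⟨a, rfl⟩
            · simp at h'
          obtain ⟨u₁, u₂, v, hu₁, hu₂, hv, hw⟩ := ih true false false h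
          rw [hu₂ rfl, hv rfl, conv_nil_nil] at hw
          refine ⟨a :: u₁, [], [], fun hf => absurd (hi1 rfl) (by simp [hf]),
            fun _ => rfl, fun _ => rfl, ?_⟩
          rw [conv_nil_nil, conv_cons_nil, conv_cons_nil, ← hw]
        | some qc =>
          obtain ⟨a₂, c₂⟩ := qc
          have hc : c₂ = c₁ := by simpa using hγeq.symm
          subst hc
          cases hc₁ : c₂ with
          | some c =>
            subst hc₁
            cases a₁ with
            | some a =>
              cases a₂ with
              | some b =>
                obtain ⟨u₁, u₂, v, hu₁, hu₂, hv, hw⟩ := ih true true true h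
                refine ⟨a :: u₁, b :: u₂, c :: v,
                  fun hf => absurd (hi1 rfl) (by simp [hf]),
                  fun hf => absurd (hi2 rfl) (by simp [hf]),
                  fun hf => absurd (hiγ rfl) (by simp [hf]), ?_⟩
                rw [conv_cons_cons a c, conv_cons_cons b c, conv_cons_cons, ← hw]
              | none =>
                obtain ⟨u₁, u₂, v, hu₁, hu₂, hv, hw⟩ := ih true false true h
                rw [hu₂ rfl] at hw
                refine ⟨a :: u₁, [], c :: v,
                  fun hf => absurd (hi1 rfl) (by simp [hf]), fun _ => rfl,
                  fun hf => absurd (hiγ rfl) (by simp [hf]), ?_⟩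
                rw [conv_cons_cons a c, conv_nil_cons, conv_cons_cons, ← hw]
            | none =>
              cases a₂ with
              | some b =>
                obtain ⟨u₁, u₂, v, hu₁, hu₂, hv, hw⟩ := ih false true true h
                rw [hu₁ rfl] at hw
                refine ⟨[], b :: u₂, c :: v, fun _ => rfl,
                  fun hf => absurd (hi2 rfl) (by simp [hf]),
                  fun hf => absurd (hiγ rfl) (by simp [hf]), ?_⟩
                rw [conv_nil_cons, conv_cons_cons b c, conv_cons_cons, ← hw]
              | none =>
                obtain ⟨u₁, u₂, v, hu₁, hu₂, hv, hw⟩ := ih false false true h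
                rw [hu₁ rfl, hu₂ rfl] at hw
                refine ⟨[], [], c :: v, fun _ => rfl, fun _ => rfl,
                  fun hf => absurd (hiγ rfl) (by simp [hf]), ?_⟩
                rw [conv_nil_cons, conv_cons_cons, ← hw]
          | none =>
            subst hc₁
            obtain ⟨a, rfl⟩ : ∃ a, a₁ = some a := by
              rcases hv1 a₁ none rfl with h' | h'
              · cases a₁ with
                | none => simp at h'
                | some a => exact ⟨a, rfl⟩
              · simp at h'
            obtain ⟨b, rfl⟩ : ∃ b, a₂ = some b := by
              rcases hv2 a₂ none rfl with h' | h'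
              · cases a₂ with
                | none => simp at h'
                | some b => exact ⟨b, rfl⟩
              · simp at h'
            obtain ⟨u₁, u₂, v, hu₁, hu₂, hv, hw⟩ := ih true true false h
            rw [hv rfl] at hw
            refine ⟨a :: u₁, b :: u₂, [],
              fun hf => absurd (hi1 rfl) (by simp [hf]),
              fun hf => absurd (hi2 rfl) (by simp [hf]), fun _ => rfl, ?_⟩
            rw [conv_cons_nil a, conv_cons_nil b, conv_cons_cons, ← hw]
    · rw [if_neg hC, dconvDFA_evalFrom_none] at h
      simp at h

lemma dconvDFA_complete {A B : Type} :
    ∀ (n : ℕ) (u₁ u₂ : List A) (v : List B) (b₁ b₂ bγ : Bool),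
    u₁.length + u₂.length + v.length ≤ n →
    (u₁ ≠ [] → b₁ = true) → (u₂ ≠ [] → b₂ = true) → (v ≠ [] → bγ = true) →
    ((dconvDFA A B).evalFrom (some (b₁, b₂, bγ))
      (conv (conv u₁ v) (conv u₂ v))).isSome := by
  intro n
  induction n with
  | zero =>
    intro u₁ u₂ v b₁ b₂ bγ h _ _ _
    have h1 : u₁ = [] := by cases u₁ <;> simp_all
    have h2 : u₂ = [] := by cases u₂ <;> simp_all
    have h3 : v = [] := by cases v <;> simp_all
    subst h1; subst h2; subst h3
    rw [conv_nil_nil, conv_nil_nil]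
    rfl
  | succ n ih =>
    intro u₁ u₂ v b₁ b₂ bγ h h₁ h₂ h₃
    match u₁, u₂, v with
    | [], [], [] => rw [conv_nil_nil, conv_nil_nil]; rfl
    | a::u₁, b::u₂, c::v =>
      rw [h₁ (by simp), h₂ (by simp), h₃ (by simp)]
      rw [conv_cons_cons a c, conv_cons_cons b c, conv_cons_cons, dfa_evalFrom_cons,
        dconvDFA_step_some, if_pos (by simp)]
      exact ih u₁ u₂ v true true true
        (by simp only [List.length_cons, List.length_nil] at h ⊢; omega)
        (fun _ => rfl) (fun _ => rfl) (fun _ => rfl)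
    | [], b::u₂, c::v =>
      rw [h₂ (by simp), h₃ (by simp)]
      rw [conv_nil_cons, conv_cons_cons b c, conv_cons_cons, dfa_evalFrom_cons,
        dconvDFA_step_some, if_pos (by simp)]
      exact ih [] u₂ v false true true
        (by simp only [List.length_cons, List.length_nil] at h ⊢; omega)
        (fun hf => absurd rfl hf) (fun _ => rfl) (fun _ => rfl)
    | a::u₁, [], c::v =>
      rw [h₁ (by simp), h₃ (by simp)]
      rw [conv_cons_cons a c, conv_nil_cons, conv_cons_cons, dfa_evalFrom_cons,
        dconvDFA_step_some, if_pos (by simp)]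
      exact ih u₁ [] v true false true
        (by simp only [List.length_cons, List.length_nil] at h ⊢; omega)
        (fun _ => rfl) (fun hf => absurd rfl hf) (fun _ => rfl)
    | [], [], c::v =>
      rw [h₃ (by simp)]
      rw [conv_nil_cons, conv_cons_cons, dfa_evalFrom_cons,
        dconvDFA_step_some, if_pos (by simp)]
      exact ih [] [] v false false true
        (by simp only [List.length_cons, List.length_nil] at h ⊢; omega)
        (fun hf => absurd rfl hf) (fun hf => absurd rfl hf) (fun _ => rfl)
    | a::u₁, b::u₂, [] =>
      rw [h₁ (by simp), h₂ (by simp)]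
      rw [conv_cons_nil a, conv_cons_nil b, conv_cons_cons, dfa_evalFrom_cons,
        dconvDFA_step_some, if_pos (by simp)]
      exact ih u₁ u₂ [] true true false
        (by simp only [List.length_cons, List.length_nil] at h ⊢; omega)
        (fun _ => rfl) (fun _ => rfl) (fun hf => absurd rfl hf)
    | a::u₁, [], [] =>
      rw [h₁ (by simp)]
      rw [conv_cons_nil a, conv_nil_nil, conv_cons_nil, dfa_evalFrom_cons,
        dconvDFA_step_some, if_pos (by simp)]
      have := ih u₁ [] [] true false false
        (by simp only [List.length_cons, List.length_nil] at h ⊢; omega)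
        (fun _ => rfl) (fun hf => absurd rfl hf) (fun hf => absurd rfl hf)
      rw [conv_nil_nil] at this
      exact this
    | [], b::u₂, [] =>
      rw [h₂ (by simp)]
      rw [conv_cons_nil b, conv_nil_nil, conv_nil_cons, dfa_evalFrom_cons,
        dconvDFA_step_some, if_pos (by simp)]
      have := ih [] u₂ [] false true false
        (by simp only [List.length_cons, List.length_nil] at h ⊢; omega)
        (fun hf => absurd rfl hf) (fun _ => rfl) (fun hf => absurd rfl hf)
      rw [conv_nil_nil] at this
      exact this

lemma dconvDFA_accepts {A B : Type}
    (w : List (Option (Option A × Option B) × Option (Option A × Option B))) :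
    w ∈ (dconvDFA A B).accepts ↔
      ∃ (u₁ u₂ : List A) (v : List B), w = conv (conv u₁ v) (conv u₂ v) := by
  rw [DFA.mem_accepts]
  constructor
  · intro h
    obtain ⟨u₁, u₂, v, _, _, _, hw⟩ := dconvDFA_sound w true true true h
    exact ⟨u₁, u₂, v, hw⟩
  · rintro ⟨u₁, u₂, v, rfl⟩
    have := dconvDFA_complete (u₁.length + u₂.length + v.length) u₁ u₂ v true true true
      le_rfl (fun _ => rfl) (fun _ => rfl) (fun _ => rfl)
    exact this

lemma conv_map {A B C D : Type} (f : A → C) (g : B → D) (u : List A) (v : List B) :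
    (conv u v).map (Prod.map (Option.map f) (Option.map g)) = conv (u.map f) (v.map g) := by
  simp [conv, List.map_map, Function.comp, List.getElem?_map]

lemma conv_swap {A B : Type} (u : List A) (v : List B) :
    (conv u v).map Prod.swap = conv v u := by
  unfold conv
  rw [Nat.max_comm]
  simp [List.map_map, Function.comp]

lemma isRegLang_preimage_map {α β : Type} (m : α → β) {L : Language β}
    (h : IsRegLang L) : IsRegLang {w : List α | w.map m ∈ L} := by
  obtain ⟨σ, inst, M, rfl⟩ := h
  refine ⟨σ, inst, ⟨fun s a => M.step s (m a), M.start, M.accept⟩, ?_⟩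
  have key : ∀ (w : List α) (s : σ),
      DFA.evalFrom ⟨fun s a => M.step s (m a), M.start, M.accept⟩ s w
        = M.evalFrom s (w.map m) := by
    intro w
    induction w with
    | nil => intro s; rfl
    | cons a w ih => intro s; rw [dfa_evalFrom_cons, List.map_cons, dfa_evalFrom_cons, ih]
  have key2 : ∀ w : List α,
      (⟨fun s a => M.step s (m a), M.start, M.accept⟩ : DFA α σ).eval w = M.eval (w.map m) :=
    fun w => key w M.start
  ext w
  show _ ↔ w.map m ∈ M.accepts
  rw [DFA.mem_accepts, DFA.mem_accepts, key2]


/-- **Direct product.** Let `C` be a class of formal languages closed under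
intersection with regular languages, finite intersection and inverse homomorphism. If
`(G,X,Λ)` and `(H,Y,Γ)` are `C`-graph automatic, then `G × H` is `C`-graph automatic with
respect to the generating set `Z = X × {1} ∪ {1} × Y` and the alphabet
`(Λ∪{⋄}) × (Γ∪{⋄})`, with normal form language `⊗(L_G, L_H)`. -/
theorem direct_product_graph_automatic (C : LangClass)
    (hInterReg : ClosedUnderInterReg C) (hInter : ClosedUnderInter C)
    (hInv : ClosedUnderInvHom C)
    {G H : Type} [Group G] [Group H] (X : Set G) (Y : Set H)
    (hsymX : ∀ x ∈ X, x⁻¹ ∈ X) (hgenX : Subgroup.closure X = ⊤)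
    (hsymY : ∀ y ∈ Y, y⁻¹ ∈ Y) (hgenY : Subgroup.closure Y = ⊤)
    {Λ Γ : Type} [Fintype Λ] [Fintype Γ]
    (LG : Language Λ) (nfG : List Λ → G) (LH : Language Γ) (nfH : List Γ → H)
    (hG : CGraphAutoWith C X LG nfG) (hH : CGraphAutoWith C Y LH nfH) :
    ∃ nf : List (Option Λ × Option Γ) → G × H,
      (∀ u ∈ LG, ∀ v ∈ LH, nf (conv u v) = (nfG u, nfH v)) ∧
      CGraphAutoWith C
        ((fun x => (x, (1 : H))) '' X ∪ (fun y => ((1 : G), y)) '' Y)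
        (convLang LG LH) nf := by
  classical
  set nf : List (Option Λ × Option Γ) → G × H :=
    fun w => (nfG (w.filterMap Prod.fst), nfH (w.filterMap Prod.snd)) with hnf_def
  have hnf : ∀ (u : List Λ) (v : List Γ), nf (conv u v) = (nfG u, nfH v) := by
    intro u v
    rw [hnf_def]
    simp only [filterMap_fst_conv, filterMap_snd_conv]
  refine ⟨nf, fun u _ v _ => hnf u v, ⟨?_, ?_, ?_⟩, ?_, ?_⟩
  · -- MapsTo
    exact fun _ _ => Set.mem_univ _
  · -- InjOn
    rintro w₁ ⟨u₁, hu₁, v₁, hv₁, rfl⟩ w₂ ⟨u₂, hu₂, v₂, hv₂, rfl⟩ heq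
    rw [hnf, hnf, Prod.mk.injEq] at heq
    rw [hG.1.2.1 hu₁ hu₂ heq.1, hH.1.2.1 hv₁ hv₂ heq.2]
  · -- SurjOn
    rintro ⟨g, h⟩ -
    obtain ⟨u, hu, hgu⟩ := hG.1.2.2 (Set.mem_univ g)
    obtain ⟨v, hv, hgv⟩ := hH.1.2.2 (Set.mem_univ h)
    exact ⟨conv u v, ⟨u, hu, v, hv, rfl⟩, by rw [hnf, hgu, hgv]⟩
  · -- L ∈ C
    have hEq : convLang LG LH =
        homPreimage (fun d : Option Λ × Option Γ => d.1.toList) LG ⊓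
        (homPreimage (fun d : Option Λ × Option Γ => d.2.toList) LH ⊓
          (convDFA Λ Γ).accepts) := by
      ext w
      constructor
      · rintro ⟨u, hu, v, hv, rfl⟩
        refine ⟨?_, ?_, (convDFA_accepts _).mpr ⟨u, v, rfl⟩⟩
        · show ((conv u v).map _).flatten ∈ LG
          rw [flatten_map_toList Prod.fst, filterMap_fst_conv]
          exact hu
        · show ((conv u v).map _).flatten ∈ LH
          rw [flatten_map_toList Prod.snd, filterMap_snd_conv]
          exact hv
      · rintro ⟨h1, h2, h3⟩
        obtain ⟨u, v, rfl⟩ := (convDFA_accepts _).mp h3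
        have h1' : ((conv u v).map (fun d : Option Λ × Option Γ => d.1.toList)).flatten ∈ LG := h1
        have h2' : ((conv u v).map (fun d : Option Λ × Option Γ => d.2.toList)).flatten ∈ LH := h2
        rw [flatten_map_toList Prod.fst, filterMap_fst_conv] at h1'
        rw [flatten_map_toList Prod.snd, filterMap_snd_conv] at h2'
        exact ⟨u, h1', v, h2', rfl⟩
    rw [hEq]
    exact hInter _ _ (hInv _ _ _ hG.2.1 _) _
      (hInterReg _ _ (hInv _ _ _ hH.2.1 _) _
        ⟨_, inferInstance, convDFA Λ Γ, rfl⟩)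
  · -- multipliers
    rintro z hz
    rcases hz with ⟨x, hx, rfl⟩ | ⟨y, hy, rfl⟩
    · -- z = (x, 1)
      have hEq : Mult nf (convLang LG LH) (x, (1 : H)) =
          homPreimage (fun d => (pairOpt d).toList) (Mult nfG LG x) ⊓
          (homPreimage (fun d => (shareOpt d).toList) LH ⊓
            (dconvDFA Λ Γ).accepts) := by
        ext w
        constructor
        · rintro ⟨w₁, ⟨u₁, hu₁, v₁, hv₁, rfl⟩, w₂, ⟨u₂, hu₂, v₂, hv₂, rfl⟩, hmul, rfl⟩
          rw [hnf, hnf, Prod.mk_mul_mk, mul_one, Prod.mk.injEq] at hmul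
          obtain ⟨hmx, hmv⟩ := hmul
          obtain rfl : v₁ = v₂ := hH.1.2.1 hv₁ hv₂ hmv
          refine ⟨?_, ?_, (dconvDFA_accepts _).mpr ⟨u₁, u₂, v₁, rfl⟩⟩
          · show ((conv (conv u₁ v₁) (conv u₂ v₁)).map _).flatten ∈ Mult nfG LG x
            rw [flatten_map_toList pairOpt,
              filterMap_pairOpt_aux (u₁.length + u₂.length + v₁.length) _ _ _ le_rfl]
            exact ⟨u₁, hu₁, u₂, hu₂, hmx, rfl⟩
          · show ((conv (conv u₁ v₁) (conv u₂ v₁)).map _).flatten ∈ LH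
            rw [flatten_map_toList shareOpt,
              filterMap_shareOpt_aux (u₁.length + u₂.length + v₁.length) _ _ _ le_rfl]
            exact hv₁
        · rintro ⟨h1, h2, h3⟩
          obtain ⟨u₁, u₂, v, rfl⟩ := (dconvDFA_accepts _).mp h3
          have h1' : ((conv (conv u₁ v) (conv u₂ v)).map
              (fun d => (pairOpt d).toList)).flatten ∈ Mult nfG LG x := h1
          have h2' : ((conv (conv u₁ v) (conv u₂ v)).map
              (fun d => (shareOpt d).toList)).flatten ∈ LH := h2
          rw [flatten_map_toList pairOpt,
            filterMap_pairOpt_aux (u₁.length + u₂.length + v.length) _ _ _ le_rfl] at h1'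
          rw [flatten_map_toList shareOpt,
            filterMap_shareOpt_aux (u₁.length + u₂.length + v.length) _ _ _ le_rfl] at h2'
          obtain ⟨u₁', hu₁, u₂', hu₂, hmx, heq⟩ := h1'
          obtain ⟨e1, e2⟩ := conv_inj heq
          subst e1; subst e2
          refine ⟨conv u₁ v, ⟨u₁, hu₁, v, h2', rfl⟩,
            conv u₂ v, ⟨u₂, hu₂, v, h2', rfl⟩, ?_, rfl⟩
          rw [hnf, hnf, Prod.mk_mul_mk, mul_one, hmx]
      rw [hEq]
      exact hInter _ _ (hInv _ _ _ (hG.2.2 x hx) _) _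
        (hInterReg _ _ (hInv _ _ _ hH.2.1 _) _
          ⟨_, inferInstance, dconvDFA Λ Γ, rfl⟩)
    · -- z = (1, y)
      set mm : Option (Option Λ × Option Γ) × Option (Option Λ × Option Γ) →
          Option (Option Γ × Option Λ) × Option (Option Γ × Option Λ) :=
        Prod.map (Option.map Prod.swap) (Option.map Prod.swap) with hmm_def
      set mm' : Option (Option Γ × Option Λ) × Option (Option Γ × Option Λ) →
          Option (Option Λ × Option Γ) × Option (Option Λ × Option Γ) :=
        Prod.map (Option.map Prod.swap) (Option.map Prod.swap) with hmm'_def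
      have key : ∀ (u : List Λ) (v₁ v₂ : List Γ),
          (conv (conv u v₁) (conv u v₂)).map mm = conv (conv v₁ u) (conv v₂ u) := by
        intro u v₁ v₂
        rw [hmm_def, conv_map, conv_swap, conv_swap]
      have key2 : ∀ (u : List Λ) (v₁ v₂ : List Γ),
          (conv (conv v₁ u) (conv v₂ u)).map mm' = conv (conv u v₁) (conv u v₂) := by
        intro u v₁ v₂
        rw [hmm'_def, conv_map, conv_swap, conv_swap]
      have hinv : ∀ (w : List (Option (Option Λ × Option Γ) × Option (Option Λ × Option Γ))),
          (w.map mm).map mm' = w := by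
        intro w
        have hpt : ∀ d, mm' (mm d) = d := by
          rintro ⟨p, q⟩
          simp [hmm_def, hmm'_def, Prod.map, Option.map_map, Function.comp]
        rw [List.map_map, show mm' ∘ mm = id from funext hpt, List.map_id]
      have hfm1 : ∀ (w : List (Option (Option Λ × Option Γ) × Option (Option Λ × Option Γ))),
          (w.map mm).filterMap pairOpt = w.filterMap (fun d => pairOpt (mm d)) := by
        intro w
        rw [List.filterMap_map]
        rfl
      have hfm2 : ∀ (w : List (Option (Option Λ × Option Γ) × Option (Option Λ × Option Γ))),
          (w.map mm).filterMap shareOpt = w.filterMap (fun d => shareOpt (mm d)) := by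
        intro w
        rw [List.filterMap_map]
        rfl
      have hEq : Mult nf (convLang LG LH) ((1 : G), y) =
          homPreimage (fun d => (pairOpt (mm d)).toList) (Mult nfH LH y) ⊓
          (homPreimage (fun d => (shareOpt (mm d)).toList) LG ⊓
            {w | w.map mm ∈ (dconvDFA Γ Λ).accepts}) := by
        ext w
        constructor
        · rintro ⟨w₁, ⟨u₁, hu₁, v₁, hv₁, rfl⟩, w₂, ⟨u₂, hu₂, v₂, hv₂, rfl⟩, hmul, rfl⟩
          rw [hnf, hnf, Prod.mk_mul_mk, mul_one, Prod.mk.injEq] at hmul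
          obtain ⟨hmx, hmy⟩ := hmul
          obtain rfl : u₁ = u₂ := hG.1.2.1 hu₁ hu₂ hmx
          refine ⟨?_, ?_, ?_⟩
          · show ((conv (conv u₁ v₁) (conv u₁ v₂)).map
              (fun d => (pairOpt (mm d)).toList)).flatten ∈ Mult nfH LH y
            rw [flatten_map_toList (fun d => pairOpt (mm d)), ← hfm1, key,
              filterMap_pairOpt_aux (v₁.length + v₂.length + u₁.length) _ _ _ le_rfl]
            exact ⟨v₁, hv₁, v₂, hv₂, hmy, rfl⟩
          · show ((conv (conv u₁ v₁) (conv u₁ v₂)).map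
              (fun d => (shareOpt (mm d)).toList)).flatten ∈ LG
            rw [flatten_map_toList (fun d => shareOpt (mm d)), ← hfm2, key,
              filterMap_shareOpt_aux (v₁.length + v₂.length + u₁.length) _ _ _ le_rfl]
            exact hu₁
          · show (conv (conv u₁ v₁) (conv u₁ v₂)).map mm ∈ (dconvDFA Γ Λ).accepts
            rw [key]
            exact (dconvDFA_accepts _).mpr ⟨v₁, v₂, u₁, rfl⟩
        · rintro ⟨h1, h2, h3⟩
          obtain ⟨v₁, v₂, u, hmap⟩ := (dconvDFA_accepts _).mp h3
          obtain rfl : w = conv (conv u v₁) (conv u v₂) := by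
            rw [← hinv w, hmap, key2]
          have h1' : ((conv (conv u v₁) (conv u v₂)).map
              (fun d => (pairOpt (mm d)).toList)).flatten ∈ Mult nfH LH y := h1
          have h2' : ((conv (conv u v₁) (conv u v₂)).map
              (fun d => (shareOpt (mm d)).toList)).flatten ∈ LG := h2
          rw [flatten_map_toList (fun d => pairOpt (mm d)), ← hfm1, key,
            filterMap_pairOpt_aux (v₁.length + v₂.length + u.length) _ _ _ le_rfl] at h1'
          rw [flatten_map_toList (fun d => shareOpt (mm d)), ← hfm2, key,
            filterMap_shareOpt_aux (v₁.length + v₂.length + u.length) _ _ _ le_rfl] at h2'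
          obtain ⟨v₁', hv₁, v₂', hv₂, hmy, heq⟩ := h1'
          obtain ⟨e1, e2⟩ := conv_inj heq
          subst e1; subst e2
          refine ⟨conv u v₁, ⟨u, h2', v₁, hv₁, rfl⟩,
            conv u v₂, ⟨u, h2', v₂, hv₂, rfl⟩, ?_, rfl⟩
          rw [hnf, hnf, Prod.mk_mul_mk, mul_one, hmy]
      rw [hEq]
      exact hInter _ _ (hInv _ _ _ (hH.2.2 y hy) _) _
        (hInterReg _ _ (hInv _ _ _ hG.2.1 _) _
          (isRegLang_preimage_map mm ⟨_, inferInstance, dconvDFA Γ Λ, rfl⟩))
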